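/- If f : I → ℝ is convex on an interval I, then for all x, y, z ∈ I: (f(x)+f(y)+f(z))/3 + f((x+y+z)/3) ≥ (2/3)·(f((x+y)/2) + f((y+z)/2) + f((x+z)/2)). -/

import Mathlib

private lemma chord5 {I : Set ℝ} (f : ℝ → ℝ)
    (hconv : ∀ x ∈ I, ∀ y ∈ I, ∀ t ∈ Set.Icc (0:ℝ) 1,
      f (t * x + (1 - t) * y) ≤ t * f x + (1 - t) * f y)
    {a b c : ℝ} (ha : a ∈ I) (hb : b ∈ I) (hac : a ≤ c) (hcb : c ≤ b) (hab : a < b) :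
    (b - a) * f c ≤ (b - c) * f a + (c - a) * f b := by
  have hba : 0 < b - a := by linarith
  set t := (b - c) / (b - a) with ht
  have ht0 : 0 ≤ t := div_nonneg (by linarith) hba.le
  have ht1 : t ≤ 1 := by rw [div_le_one hba]; linarith
  have hc : t * a + (1 - t) * b = c := by
    rw [ht]; field_simp [hba.ne']; try ring
  have h := hconv a ha b hb t ⟨ht0, ht1⟩
  rw [hc] at h
  have h2 : (b - a) * f c ≤ (b - a) * (t * f a + (1 - t) * f b) :=
    mul_le_mul_of_nonneg_left h hba.le
  have h3 : (b - a) * (t * f a + (1 - t) * f b) = (b - c) * f a + (c - a) * f b := by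
    rw [ht]; field_simp [hba.ne']; try ring
  linarith

private lemma key5 (I : Set ℝ) (hI : I.OrdConnected) (f : ℝ → ℝ)
    (hconv : ∀ x ∈ I, ∀ y ∈ I, ∀ t ∈ Set.Icc (0:ℝ) 1,
      f (t * x + (1 - t) * y) ≤ t * f x + (1 - t) * f y)
    (x : ℝ) (hx : x ∈ I) (y : ℝ) (hy : y ∈ I) (z : ℝ) (hz : z ∈ I)
    (hxy : x ≤ y) (hyz : y ≤ z) :
    (2 / 3) * (f ((x + y) / 2) + f ((y + z) / 2) + f ((x + z) / 2)) ≤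
      (f x + f y + f z) / 3 + f ((x + y + z) / 3) := by
  set m := (x + y + z) / 3 with hm
  have hxm : x ≤ m := by rw [hm]; linarith
  have hmz : m ≤ z := by rw [hm]; linarith
  have hmI : m ∈ I := hI.out hx hz ⟨hxm, hmz⟩
  rcases le_total y m with hym | hmy
  · -- y ≤ m : midpoints (x+z)/2 and (y+z)/2 lie in [m, z]
    have hA : f ((x + y) / 2) ≤ (f x + f y) / 2 := by
      have h := hconv x hx y hy (1/2) ⟨by norm_num, by norm_num⟩
      have e : (1:ℝ)/2 * x + (1 - 1/2) * y = (x + y) / 2 := by ring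
      rw [e] at h; linarith
    rcases eq_or_lt_of_le hmz with heq | hlt
    · -- degenerate: m = z forces x = y = z
      have h3 : x + y = 2 * z := by rw [hm] at heq; linarith
      have hx' : x = z := by linarith
      have hy' : y = z := by linarith
      subst hx'
      rw [hy']
      have e1 : (x + x) / 2 = x := by ring
      have e2 : m = x := by rw [hm, hy']; ring
      rw [e1, e2]
      linarith
    · have c1 : (z - m) * f ((x + z) / 2) ≤ (z - (x + z) / 2) * f m + ((x + z) / 2 - m) * f z :=
        chord5 f hconv hmI hz (by rw [hm]; linarith) (by linarith) hlt
      have c2 : (z - m) * f ((y + z) / 2) ≤ (z - (y + z) / 2) * f m + ((y + z) / 2 - m) * f z :=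
        chord5 f hconv hmI hz (by rw [hm]; linarith) (by linarith) hlt
      have hpos : 0 < z - m := by linarith
      have hsum : (z - m) * (f ((y + z) / 2) + f ((x + z) / 2)) ≤
          (z - m) * ((3/2) * f m + (1/2) * f z) := by
        have e : (z - (x + z) / 2) * f m + ((x + z) / 2 - m) * f z
            + ((z - (y + z) / 2) * f m + ((y + z) / 2 - m) * f z)
            = (z - m) * ((3/2) * f m + (1/2) * f z) := by rw [hm]; ring
        nlinarith [c1, c2]
      have hBC : f ((y + z) / 2) + f ((x + z) / 2) ≤ (3/2) * f m + (1/2) * f z :=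
        (mul_le_mul_iff_right₀ hpos).mp hsum
      linarith
  · -- m ≤ y : midpoints (x+y)/2 and (x+z)/2 lie in [x, m]
    have hB : f ((y + z) / 2) ≤ (f y + f z) / 2 := by
      have h := hconv y hy z hz (1/2) ⟨by norm_num, by norm_num⟩
      have e : (1:ℝ)/2 * y + (1 - 1/2) * z = (y + z) / 2 := by ring
      rw [e] at h; linarith
    rcases eq_or_lt_of_le hxm with heq | hlt
    · have h3 : y + z = 2 * x := by rw [hm] at heq; linarith
      have hy' : y = x := by linarith
      have hz' : z = x := by linarith
      rw [hy', hz']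
      have e1 : (x + x) / 2 = x := by ring
      have e2 : m = x := by rw [hm, hy', hz']; ring
      rw [e1, e2]
      linarith
    · have c1 : (m - x) * f ((x + y) / 2) ≤ (m - (x + y) / 2) * f x + ((x + y) / 2 - x) * f m :=
        chord5 f hconv hx hmI (by linarith) (by rw [hm]; linarith) hlt
      have c2 : (m - x) * f ((x + z) / 2) ≤ (m - (x + z) / 2) * f x + ((x + z) / 2 - x) * f m :=
        chord5 f hconv hx hmI (by linarith) (by rw [hm]; linarith) hlt
      have hpos : 0 < m - x := by linarith
      have hsum : (m - x) * (f ((x + y) / 2) + f ((x + z) / 2)) ≤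
          (m - x) * ((1/2) * f x + (3/2) * f m) := by
        have e : (m - (x + y) / 2) * f x + ((x + y) / 2 - x) * f m
            + ((m - (x + z) / 2) * f x + ((x + z) / 2 - x) * f m)
            = (m - x) * ((1/2) * f x + (3/2) * f m) := by rw [hm]; ring
        nlinarith [c1, c2]
      have hAC : f ((x + y) / 2) + f ((x + z) / 2) ≤ (1/2) * f x + (3/2) * f m :=
        (mul_le_mul_iff_right₀ hpos).mp hsum
      linarith

theorem stmt_5 (I : Set ℝ) (hI : I.OrdConnected)
    (f : ℝ → ℝ)
    (hconv : ∀ x ∈ I, ∀ y ∈ I, ∀ t ∈ Set.Icc (0:ℝ) 1,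
      f (t * x + (1 - t) * y) ≤ t * f x + (1 - t) * f y) :
    ∀ x ∈ I, ∀ y ∈ I, ∀ z ∈ I,
      (2 / 3) * (f ((x + y) / 2) + f ((y + z) / 2) + f ((x + z) / 2)) ≤
        (f x + f y + f z) / 3 + f ((x + y + z) / 3) := by
  intro x hx y hy z hz
  rcases le_total x y with hxy | hyx
  · rcases le_total y z with hyz | hzy
    · exact key5 I hI f hconv x hx y hy z hz hxy hyz
    · rcases le_total x z with hxz | hzx
      · have h := key5 I hI f hconv x hx z hz y hy hxz hzy
        ring_nf at h ⊢; linarith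
      · have h := key5 I hI f hconv z hz x hx y hy hzx hxy
        ring_nf at h ⊢; linarith
  · rcases le_total x z with hxz | hzx
    · have h := key5 I hI f hconv y hy x hx z hz hyx hxz
      ring_nf at h ⊢; linarith
    · rcases le_total y z with hyz | hzy
      · have h := key5 I hI f hconv y hy z hz x hx hyz hzx
        ring_nf at h ⊢; linarith
      · have h := key5 I hI f hconv z hz y hy x hx hzy hyx
        ring_nf at h ⊢; linarith
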